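/- For θ > 0 and h > 0, with c = coth(π θ h), the interpolation error of the optimal exponential-spectral-density interpolant admits the bound: the exact closed form π − (1/(π h c))·[π/(2θ) + (c² − 1)·(π/(4θ))·(1 − e^{−2πhθ}(1 + 2πhθ))] is nonnegative and tends to 0 as h → 0⁺ (for fixed θ). -/

import Mathlib

open Real Filter Topology

/-- The real hyperbolic cotangent. -/
noncomputable def coth (x : ℝ) : ℝ := Real.cosh x / Real.sinh x

/-- Abstract algebraic identity underlying the closed form. -/
lemma coth_alg (a b c E F : ℝ) (ha : a ≠ 0) (hb : b ≠ 0) (hc : c ≠ 0)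
    (hE : 0 < E) (hF : 0 < F) (hEF : E * F = 1)
    (h3 : E - F ≠ 0) :
    a - 1 / (a * c * (((E + F)/2) / ((E - F)/2))) *
        (a / (2 * b) + ((((E + F)/2) / ((E - F)/2)) ^ 2 - 1) * (a / (4 * b)) *
          (1 - F^2 * (1 + 2 * a * c * b)))
    = a * (((E*E + F*F)/2) / ((E*E - F*F)/2) - 1 / (2 * (a * b * c))) := by
  have h4 : E + F ≠ 0 := by positivity
  have h5 : E*E - F*F ≠ 0 := by
    intro hz
    have : (E - F) * (E + F) = 0 := by ring_nf; linarith [hz]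
    rcases mul_eq_zero.1 this with h | h
    · exact h3 h
    · exact h4 h
  have h6 : E^2 - F^2 ≠ 0 := by rw [sq, sq]; exact h5
  field_simp
  linear_combination (E + F) * (E - F) * 8 * F ^ 2 * (1 + 2 * a * b * c) * hEF

/-- `sinh s ≤ s * cosh s` for `s ≥ 0`. -/
lemma sinh_le_mul_cosh {s : ℝ} (hs : 0 ≤ s) : Real.sinh s ≤ s * Real.cosh s := by
  have hmono : MonotoneOn (fun x : ℝ => x * Real.cosh x - Real.sinh x) (Set.Ici 0) := by
    have hder : ∀ x : ℝ, HasDerivAt (fun x : ℝ => x * Real.cosh x - Real.sinh x)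
        (x * Real.sinh x) x := by
      intro x
      have h1 : HasDerivAt (fun x : ℝ => x * Real.cosh x)
          (1 * Real.cosh x + x * Real.sinh x) x :=
        (hasDerivAt_id x).mul (Real.hasDerivAt_cosh x)
      have h2 := h1.sub (Real.hasDerivAt_sinh x)
      exact h2.congr_deriv (by ring)
    apply monotoneOn_of_deriv_nonneg (convex_Ici 0)
    · exact (Continuous.continuousOn (by continuity))
    · intro x hx
      exact ((hder x).differentiableAt).differentiableWithinAt
    · intro x hx
      rw [(hder x).deriv]
      have hx0 : 0 < x := by simpa [interior_Ici] using hx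
      exact mul_nonneg hx0.le (Real.sinh_nonneg_iff.2 hx0.le)
  have := hmono (Set.self_mem_Ici) (Set.mem_Ici.2 hs) hs
  simpa using this

/-- `s * cosh s - sinh s ≤ s^2 * sinh s` for `s ≥ 0`. -/
lemma mul_cosh_sub_sinh_le {s : ℝ} (hs : 0 ≤ s) :
    s * Real.cosh s - Real.sinh s ≤ s ^ 2 * Real.sinh s := by
  have hmono : MonotoneOn
      (fun x : ℝ => x ^ 2 * Real.sinh x + Real.sinh x - x * Real.cosh x) (Set.Ici 0) := by
    have hder : ∀ x : ℝ, HasDerivAt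
        (fun x : ℝ => x ^ 2 * Real.sinh x + Real.sinh x - x * Real.cosh x)
        (x * Real.sinh x + x ^ 2 * Real.cosh x) x := by
      intro x
      have h1 : HasDerivAt (fun x : ℝ => x ^ 2) (2 * x) x := by
        simpa using hasDerivAt_pow 2 x
      have h2 : HasDerivAt (fun x : ℝ => x ^ 2 * Real.sinh x)
          (2 * x * Real.sinh x + x ^ 2 * Real.cosh x) x :=
        h1.mul (Real.hasDerivAt_sinh x)
      have h3 : HasDerivAt (fun x : ℝ => x * Real.cosh x)
          (1 * Real.cosh x + x * Real.sinh x) x :=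
        (hasDerivAt_id x).mul (Real.hasDerivAt_cosh x)
      have h4 := (h2.add (Real.hasDerivAt_sinh x)).sub h3
      exact h4.congr_deriv (by ring)
    apply monotoneOn_of_deriv_nonneg (convex_Ici 0)
    · exact (Continuous.continuousOn (by continuity))
    · intro x hx
      exact ((hder x).differentiableAt).differentiableWithinAt
    · intro x hx
      rw [(hder x).deriv]
      have hx0 : 0 < x := by simpa [interior_Ici] using hx
      have := Real.sinh_nonneg_iff.2 hx0.le
      have hc := (Real.cosh_pos x).le
      positivity
  have := hmono (Set.self_mem_Ici) (Set.mem_Ici.2 hs) hs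
  simp only [Real.sinh_zero, Real.cosh_zero] at this
  linarith

/-- Closed form: the error expression equals `π * (coth (2t) - 1/(2t))` with `t = πθh`. -/
lemma error_eq (θ h : ℝ) (hθ : 0 < θ) (hh : 0 < h) :
    π - 1 / (π * h * coth (π * θ * h)) *
        (π / (2 * θ) + (coth (π * θ * h) ^ 2 - 1) * (π / (4 * θ)) *
          (1 - Real.exp (-(2 * π * h * θ)) * (1 + 2 * π * h * θ)))
    = π * (coth (2 * (π * θ * h)) - 1 / (2 * (π * θ * h))) := by
  have hπ : (0:ℝ) < π := Real.pi_pos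
  set t := π * θ * h with ht
  have htpos : 0 < t := by positivity
  have hexp2 : Real.exp (-(2 * π * h * θ)) = Real.exp (-t) ^ 2 := by
    rw [show -(2*π*h*θ) = (-t) + (-t) by rw [ht]; ring, Real.exp_add]; ring
  have hS : Real.sinh t = (Real.exp t - Real.exp (-t)) / 2 := Real.sinh_eq t
  have hC : Real.cosh t = (Real.exp t + Real.exp (-t)) / 2 := Real.cosh_eq t
  have hS2 : Real.sinh (2 * t) = (Real.exp t * Real.exp t - Real.exp (-t) * Real.exp (-t)) / 2 := by
    rw [Real.sinh_eq]
    rw [show -(2*t) = (-t) + (-t) by ring, show (2:ℝ)*t = t + t by ring, Real.exp_add,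
      Real.exp_add]
  have hC2 : Real.cosh (2 * t) = (Real.exp t * Real.exp t + Real.exp (-t) * Real.exp (-t)) / 2 := by
    rw [Real.cosh_eq]
    rw [show -(2*t) = (-t) + (-t) by ring, show (2:ℝ)*t = t + t by ring, Real.exp_add,
      Real.exp_add]
  have hEF : Real.exp t * Real.exp (-t) = 1 := by
    rw [← Real.exp_add]; simp
  have hsub : Real.exp t - Real.exp (-t) ≠ 0 := by
    have h1 : Real.exp (-t) < Real.exp t := Real.exp_lt_exp.2 (by linarith)
    linarith
  have h2πhθ : 2 * π * h * θ = 2 * (π * θ * h) := by ring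
  unfold coth
  rw [hS, hC, hS2, hC2, hexp2]
  have := coth_alg π θ h (Real.exp t) (Real.exp (-t)) hπ.ne' hθ.ne' hh.ne'
    (Real.exp_pos t) (Real.exp_pos (-t)) hEF hsub
  calc π - 1 / (π * h * ((Real.exp t + Real.exp (-t)) / 2 / ((Real.exp t - Real.exp (-t)) / 2))) *
        (π / (2 * θ) + (((Real.exp t + Real.exp (-t)) / 2 / ((Real.exp t - Real.exp (-t)) / 2)) ^ 2
            - 1) * (π / (4 * θ)) * (1 - Real.exp (-t) ^ 2 * (1 + 2 * π * h * θ)))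
      = π - 1 / (π * h * ((Real.exp t + Real.exp (-t)) / 2 / ((Real.exp t - Real.exp (-t)) / 2))) *
        (π / (2 * θ) + (((Real.exp t + Real.exp (-t)) / 2 / ((Real.exp t - Real.exp (-t)) / 2)) ^ 2
            - 1) * (π / (4 * θ)) * (1 - Real.exp (-t) ^ 2 * (1 + 2 * π * h * θ))) := rfl
    _ = π * ((Real.exp t * Real.exp t + Real.exp (-t) * Real.exp (-t)) / 2 /
          ((Real.exp t * Real.exp t - Real.exp (-t) * Real.exp (-t)) / 2) - 1 / (2 * (π * θ * h))) := by
        convert this using 4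

theorem interpolation_error_closed_form_nonneg_and_vanishing (θ : ℝ) (hθ : 0 < θ) :
    (∀ h : ℝ, 0 < h →
      0 ≤ π - 1 / (π * h * coth (π * θ * h)) *
        (π / (2 * θ) + (coth (π * θ * h) ^ 2 - 1) * (π / (4 * θ)) *
          (1 - Real.exp (-(2 * π * h * θ)) * (1 + 2 * π * h * θ)))) ∧
    Tendsto
      (fun h : ℝ =>
        π - 1 / (π * h * coth (π * θ * h)) *
          (π / (2 * θ) + (coth (π * θ * h) ^ 2 - 1) * (π / (4 * θ)) *
            (1 - Real.exp (-(2 * π * h * θ)) * (1 + 2 * π * h * θ))))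
      (𝓝[>] 0) (𝓝 0) := by
  have hπ : (0:ℝ) < π := Real.pi_pos
  -- coth s - 1/s as a quotient
  have hquot : ∀ s : ℝ, 0 < s → coth s - 1 / s
      = (s * Real.cosh s - Real.sinh s) / (s * Real.sinh s) := by
    intro s hs
    have hsinh : 0 < Real.sinh s := Real.sinh_pos_iff.2 hs
    unfold coth
    field_simp
  have hnn : ∀ s : ℝ, 0 < s → 0 ≤ coth s - 1 / s := by
    intro s hs
    rw [hquot s hs]
    have hsinh : 0 < Real.sinh s := Real.sinh_pos_iff.2 hs
    apply div_nonneg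
    · linarith [sinh_le_mul_cosh hs.le]
    · positivity
  have hub : ∀ s : ℝ, 0 < s → coth s - 1 / s ≤ s := by
    intro s hs
    rw [hquot s hs]
    have hsinh : 0 < Real.sinh s := Real.sinh_pos_iff.2 hs
    rw [div_le_iff₀ (by positivity)]
    have := mul_cosh_sub_sinh_le hs.le
    nlinarith
  constructor
  · intro h hh
    rw [error_eq θ h hθ hh]
    have hs : 0 < 2 * (π * θ * h) := by positivity
    exact mul_nonneg hπ.le (hnn _ hs)
  · have hcong : (fun h : ℝ =>
        π - 1 / (π * h * coth (π * θ * h)) *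
          (π / (2 * θ) + (coth (π * θ * h) ^ 2 - 1) * (π / (4 * θ)) *
            (1 - Real.exp (-(2 * π * h * θ)) * (1 + 2 * π * h * θ))))
        =ᶠ[𝓝[>] (0:ℝ)]
        (fun h : ℝ => π * (coth (2 * (π * θ * h)) - 1 / (2 * (π * θ * h)))) := by
      filter_upwards [self_mem_nhdsWithin] with h hh
      exact error_eq θ h hθ hh
    rw [tendsto_congr' hcong]
    apply squeeze_zero'
    · filter_upwards [self_mem_nhdsWithin] with h hh
      have hh' : (0:ℝ) < h := hh
      have hs : 0 < 2 * (π * θ * h) := by positivity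
      exact mul_nonneg hπ.le (hnn _ hs)
    · filter_upwards [self_mem_nhdsWithin] with h hh
      have hh' : (0:ℝ) < h := hh
      have hs : 0 < 2 * (π * θ * h) := by positivity
      exact mul_le_mul_of_nonneg_left (hub _ hs) hπ.le
    · have : Tendsto (fun h : ℝ => π * (2 * (π * θ * h))) (𝓝 0) (𝓝 (π * (2 * (π * θ * 0)))) := by
        exact (continuous_const.mul (continuous_const.mul
          (continuous_const.mul continuous_id))).tendsto 0
      simp only [mul_zero] at this
      exact this.mono_left nhdsWithin_le_nhds
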